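/- Let n ≥ 2 and a ≥ 2 be integers, and let y₁,…,y_n be real numbers with ∑_{i=1}^n y_i = 0. Writing p_s = ∑_{i=1}^n y_i^s, one has ∑_{1≤i<j≤n} (y_i + y_j)^a = (n − 2^{a−1}) p_a + (1/2) ∑_{s=2}^{a−2} C(a,s) p_{a−s} p_s, where C(a,s) denotes the binomial coefficient. -/

import Mathlib

theorem statement11 (n a : ℕ) (hn : 2 ≤ n) (ha : 2 ≤ a)
    (y : Fin n → ℝ) (hsum : ∑ i, y i = 0) :
    (∑ i : Fin n, ∑ j : Fin n, if i < j then (y i + y j) ^ a else 0)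
      = ((n : ℝ) - 2 ^ (a - 1)) * (∑ i, (y i) ^ a)
        + (1 / 2) * ∑ s ∈ Finset.Icc 2 (a - 2),
            (a.choose s : ℝ) * (∑ i, (y i) ^ (a - s)) * (∑ i, (y i) ^ s) := by
  set p : ℕ → ℝ := fun s => ∑ i, (y i) ^ s with hp
  set S : ℝ := ∑ i : Fin n, ∑ j : Fin n, if i < j then (y i + y j) ^ a else 0 with hS
  have hp1 : p 1 = 0 := by simp [hp, hsum]
  have hp0 : p 0 = n := by simp [hp]
  -- full sum via binomial theorem
  have key : ∀ s : ℕ, (a.choose s : ℝ) * p s * p (a - s)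
      = ∑ i : Fin n, ∑ j : Fin n, (a.choose s : ℝ) * ((y i) ^ s * (y j) ^ (a - s)) := by
    intro s
    rw [hp, mul_assoc, Finset.sum_mul_sum, Finset.mul_sum]
    exact Finset.sum_congr rfl fun i _ => by rw [Finset.mul_sum]
  have h1 : ∀ i j : Fin n, (y i + y j) ^ a
      = ∑ s ∈ Finset.range (a+1), (a.choose s : ℝ) * ((y i) ^ s * (y j) ^ (a - s)) := by
    intro i j
    rw [add_pow]
    exact Finset.sum_congr rfl fun s hs => by ring
  have hfull : (∑ i : Fin n, ∑ j : Fin n, (y i + y j) ^ a)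
      = ∑ s ∈ Finset.range (a+1), (a.choose s : ℝ) * p s * p (a - s) := by
    calc (∑ i : Fin n, ∑ j : Fin n, (y i + y j) ^ a)
        = ∑ i : Fin n, ∑ j : Fin n, ∑ s ∈ Finset.range (a+1),
            (a.choose s : ℝ) * ((y i) ^ s * (y j) ^ (a - s)) := by simp_rw [h1]
      _ = ∑ i : Fin n, ∑ s ∈ Finset.range (a+1), ∑ j : Fin n,
            (a.choose s : ℝ) * ((y i) ^ s * (y j) ^ (a - s)) :=
          Finset.sum_congr rfl fun i _ => Finset.sum_comm
      _ = ∑ s ∈ Finset.range (a+1), ∑ i : Fin n, ∑ j : Fin n,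
            (a.choose s : ℝ) * ((y i) ^ s * (y j) ^ (a - s)) := Finset.sum_comm
      _ = ∑ s ∈ Finset.range (a+1), (a.choose s : ℝ) * p s * p (a - s) :=
          Finset.sum_congr rfl fun s _ => (key s).symm
  -- trichotomy split
  have hdiag : ∀ i : Fin n, (∑ j : Fin n, if i = j then (y i + y j) ^ a else 0)
      = (2:ℝ)^a * (y i)^a := by
    intro i
    rw [Finset.sum_ite_eq Finset.univ i (fun j => (y i + y j) ^ a),
      if_pos (Finset.mem_univ i), ← two_mul, mul_pow]
  have hswap : (∑ i : Fin n, ∑ j : Fin n, if j < i then (y i + y j) ^ a else 0) = S := by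
    rw [hS, Finset.sum_comm]
    exact Finset.sum_congr rfl fun i _ => Finset.sum_congr rfl fun j _ => by
      rw [add_comm]
  have htri : (∑ i : Fin n, ∑ j : Fin n, (y i + y j) ^ a)
      = S + (2:ℝ)^a * p a + S := by
    have h2 : ∀ i j : Fin n, (y i + y j) ^ a
        = (if i < j then (y i + y j) ^ a else 0)
          + (if i = j then (y i + y j) ^ a else 0)
          + (if j < i then (y i + y j) ^ a else 0) := by
      intro i j
      rcases lt_trichotomy i j with h | h | h
      · simp [h, h.ne, h.not_gt, h.ne']
      · subst h; simp
      · simp [h, h.ne, h.not_gt, h.ne']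
    calc (∑ i : Fin n, ∑ j : Fin n, (y i + y j) ^ a)
        = ∑ i : Fin n, ∑ j : Fin n,
            ((if i < j then (y i + y j) ^ a else 0)
              + (if i = j then (y i + y j) ^ a else 0)
              + (if j < i then (y i + y j) ^ a else 0)) :=
          Finset.sum_congr rfl fun i _ => Finset.sum_congr rfl fun j _ => h2 i j
      _ = S + (2:ℝ)^a * p a + S := by
          simp_rw [Finset.sum_add_distrib, hdiag]
          rw [hswap, ← Finset.mul_sum, hp, hS]
  -- split the range sum
  have hT : (∑ s ∈ Finset.range (a+1), (a.choose s : ℝ) * p s * p (a - s))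
      = (n:ℝ) * p a + (n:ℝ) * p a
        + ∑ s ∈ Finset.Icc 2 (a - 2), (a.choose s : ℝ) * p (a - s) * p s := by
    have hsub : insert 0 (insert a (Finset.Icc 2 (a-2))) ⊆ Finset.range (a+1) := by
      intro s hs
      simp only [Finset.mem_insert, Finset.mem_Icc] at hs
      simp only [Finset.mem_range]
      omega
    rw [← Finset.sum_subset hsub]
    · rw [Finset.sum_insert (by simp only [Finset.mem_insert, Finset.mem_Icc]; omega),
        Finset.sum_insert (by simp only [Finset.mem_Icc]; omega)]
      have e0 : (a.choose 0 : ℝ) * p 0 * p (a - 0) = (n:ℝ) * p a := by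
        simp [hp0]
      have ea : (a.choose a : ℝ) * p a * p (a - a) = (n:ℝ) * p a := by
        simp [hp0]
        ring
      rw [e0, ea]
      have : ∀ s ∈ Finset.Icc 2 (a-2), (a.choose s : ℝ) * p s * p (a - s)
          = (a.choose s : ℝ) * p (a - s) * p s := fun s _ => by ring
      rw [Finset.sum_congr rfl this]
      ring
    · intro s hs hns
      simp only [Finset.mem_range] at hs
      simp only [Finset.mem_insert, Finset.mem_Icc] at hns
      push_neg at hns
      have : s = 1 ∨ a - s = 1 := by omega
      rcases this with h | h
      · rw [h, hp1]; ring
      · rw [h, hp1]; ring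
  have hpow : (2:ℝ)^a = 2^(a-1) * 2 := by
    rw [← pow_succ]
    congr 1
    omega
  have h2 : S + (2:ℝ)^a * p a + S
      = (n:ℝ) * p a + (n:ℝ) * p a
        + ∑ s ∈ Finset.Icc 2 (a - 2), (a.choose s : ℝ) * p (a - s) * p s := by
    rw [← htri, hfull, hT]
  show S = ((n : ℝ) - 2 ^ (a - 1)) * p a + (1/2) * ∑ s ∈ Finset.Icc 2 (a - 2),
      (a.choose s : ℝ) * p (a - s) * p s
  linear_combination h2/2 - (p a)/2 * hpow
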